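/- Let δ ∈ ℝ, let (λ_k)_{k≥0} be a strictly increasing sequence of positive real numbers, let λ_# ∈ (0, λ₀], and let f ∈ 𝒟(δ, λ, λ_#) with associated Dirichlet series L_n(s) = Σ_{k≥0} a^n_k λ_k^{−s}. Assume that at least one coefficient a^n_k is nonzero (i.e. some L_n is not identically zero). Then there exist δ' > δ and a constant C₀ > 0 such that the set of zeroes of f in Ω_{δ',C₀} = {s ∈ ℂ : Re s > δ' and Re s ≤ C₀·log|Im s|} is finite. -/

import Mathlib

/-- Membership in the class `𝒟(δ, λ)`: the Dirichlet series with coefficients `a`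
and frequencies `λ` converges absolutely at every real `σ > δ`. -/
def DirichletClass (δ : ℝ) (lam : ℕ → ℝ) (a : ℕ → ℂ) : Prop :=
  ∀ σ : ℝ, δ < σ → Summable fun k => ‖a k‖ * lam k ^ (-σ)

/-- The Dirichlet series `L(s) = Σ_k a_k λ_k^{-s}`. -/
noncomputable def DirichletSeries (lam : ℕ → ℝ) (a : ℕ → ℂ) (s : ℂ) : ℂ :=
  ∑' k, a k * (lam k : ℂ) ^ (-s)

open Filter Topology

/-- If `f ∈ 𝒟(δ, λ, λ_#)` and at least one coefficient `aⁿ_k` is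
nonzero, then there are `δ' > δ` and `C₀ > 0` such that `f` has only finitely many
zeroes in `Ω_{δ',C₀} = {s : Re s > δ', Re s ≤ C₀ log |Im s|}`. -/
theorem stmt3 (δ : ℝ) (lam : ℕ → ℝ) (hmono : StrictMono lam) (hpos : ∀ k, 0 < lam k)
    (lamSharp : ℝ) (hSharp₀ : 0 < lamSharp) (hSharp₁ : lamSharp ≤ lam 0)
    (a : ℕ → ℕ → ℂ) (hD : ∀ n, DirichletClass δ lam (a n))
    (f : ℂ → ℂ) (hf : DifferentiableOn ℂ f {s : ℂ | δ < s.re})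
    (hrem : ∀ N : ℕ, ∃ C : ℝ, 0 < C ∧ ∀ s : ℂ, δ < s.re →
      ‖f s - ∑ n ∈ Finset.range (N + 1), s ^ (-(n : ℤ)) * DirichletSeries lam (a n) s‖
        ≤ C * ‖s‖ ^ (-(N + 1 : ℤ)) * lamSharp ^ (-s.re))
    (ha : ∃ n k, a n k ≠ 0) :
    ∃ δ' : ℝ, δ < δ' ∧ ∃ C₀ : ℝ, 0 < C₀ ∧
      {s : ℂ | δ' < s.re ∧ s.re ≤ C₀ * Real.log |s.im| ∧ f s = 0}.Finite := by
  classical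
  -- minimal row n₀ and minimal index k₀ with a nonzero coefficient
  have hn : ∃ n, ∃ k, a n k ≠ 0 := ha
  set n₀ := Nat.find hn with hn₀def
  have hk : ∃ k, a n₀ k ≠ 0 := Nat.find_spec hn
  set k₀ := Nat.find hk with hk₀def
  have ha₀ : a n₀ k₀ ≠ 0 := Nat.find_spec hk
  have ha₀pos : 0 < ‖a n₀ k₀‖ := norm_pos_iff.2 ha₀
  have hzero_n : ∀ n < n₀, ∀ k, a n k = 0 := by
    intro n hn' k
    by_contra h
    exact Nat.find_min hn hn' ⟨k, h⟩
  have hzero_k : ∀ k < k₀, a n₀ k = 0 := by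
    intro k hk'
    by_contra h
    exact Nat.find_min hk hk' h
  clear_value k₀ n₀
  set μ := lam k₀ with hμdef
  set ν := lam (k₀ + 1) with hνdef
  have hμ : 0 < μ := hpos k₀
  have hν : 0 < ν := hpos (k₀ + 1)
  have hμν : μ < ν := hmono (Nat.lt_succ_self k₀)
  set r := μ / ν with hrdef
  have hr0 : 0 < r := div_pos hμ hν
  have hr1 : r < 1 := (div_lt_one hν).2 hμν
  set σ₁ := δ + 1 with hσ₁def
  have hσ₁ : δ < σ₁ := by simp [hσ₁def]
  set Aconst := ∑' k, ‖a n₀ k‖ * lam k ^ (-σ₁) with hAdef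
  have hApos : 0 ≤ Aconst := tsum_nonneg fun k =>
    mul_nonneg (norm_nonneg _) (Real.rpow_nonneg (hpos k).le _)
  set B := ν ^ σ₁ * Aconst with hBdef
  have hB0 : 0 ≤ B := mul_nonneg (Real.rpow_nonneg hν.le _) hApos
  obtain ⟨C, hCpos, hC⟩ := hrem n₀
  -- choice of C₀
  have hμSharp : 0 < 2 * μ / lamSharp := by positivity
  have hμSharp1 : 1 ≤ 2 * μ / lamSharp := by
    rw [le_div_iff₀ hSharp₀]
    have : lamSharp ≤ μ := le_trans hSharp₁ (hmono.monotone (Nat.zero_le k₀))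
    linarith
  have hlogpos : 0 < 1 + Real.log (2 * μ / lamSharp) := by
    have := Real.log_nonneg hμSharp1
    linarith
  set C₀ := (1 + Real.log (2 * μ / lamSharp))⁻¹ with hC₀def
  have hC₀pos : 0 < C₀ := inv_pos.2 hlogpos
  have hC₀exp : 2 * μ / lamSharp ≤ Real.exp C₀⁻¹ := by
    rw [hC₀def, inv_inv]
    calc 2 * μ / lamSharp = Real.exp (Real.log (2 * μ / lamSharp)) :=
          (Real.exp_log hμSharp).symm
      _ ≤ Real.exp (1 + Real.log (2 * μ / lamSharp)) := Real.exp_le_exp.2 (by linarith)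
  -- choice of δ' via a tendsto argument
  have htend : Tendsto (fun σ : ℝ => B * r ^ σ + C * (2 : ℝ)⁻¹ ^ σ) atTop (𝓝 0) := by
    have h1 := tendsto_rpow_atTop_of_base_lt_one r (by linarith) hr1
    have h2 := tendsto_rpow_atTop_of_base_lt_one ((2 : ℝ)⁻¹) (by norm_num) (by norm_num)
    have := (h1.const_mul B).add (h2.const_mul C)
    simpa using this
  have hev : ∀ᶠ σ : ℝ in atTop, B * r ^ σ + C * (2 : ℝ)⁻¹ ^ σ < ‖a n₀ k₀‖ :=
    htend.eventually_lt_const ha₀pos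
  obtain ⟨x₀, hx₀⟩ := eventually_atTop.1 hev
  set δ' := max (max x₀ (δ + 1)) 1 with hδ'def
  have hδδ' : δ < δ' := by
    have : δ + 1 ≤ δ' := le_trans (le_max_right _ _) (le_max_left _ _)
    linarith
  refine ⟨δ', hδδ', C₀, hC₀pos, ?_⟩
  have hempty : {s : ℂ | δ' < s.re ∧ s.re ≤ C₀ * Real.log |s.im| ∧ f s = 0} = ∅ := by
    rw [Set.eq_empty_iff_forall_notMem]
    rintro s ⟨h₁, h₂, hfs⟩
    set σ := s.re with hσdef
    have hσδ : δ < σ := lt_trans hδδ' h₁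
    have hσ1 : 1 < σ := lt_of_le_of_lt (le_max_right _ _) h₁
    have hσσ₁ : σ₁ ≤ σ := by
      have : δ + 1 ≤ δ' := le_trans (le_max_right _ _) (le_max_left _ _)
      rw [hσ₁def]; linarith
    have hσx₀ : x₀ ≤ σ := le_of_lt (lt_of_le_of_lt (le_trans (le_max_left _ _) (le_max_left _ _)) h₁)
    have hs0 : s ≠ 0 := by
      intro h
      have : σ = 0 := by rw [hσdef, h, Complex.zero_re]
      linarith
    have hsnorm : 0 < ‖s‖ := norm_pos_iff.2 hs0
    -- Step A : ‖s‖ ≥ exp (σ / C₀)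
    have hlogim : σ / C₀ ≤ Real.log |s.im| := by
      rw [div_le_iff₀ hC₀pos] at *
      linarith [h₂, mul_comm C₀ (Real.log |s.im|)]
    have himpos : 0 < |s.im| := by
      by_contra h
      push_neg at h
      have : |s.im| = 0 := le_antisymm h (abs_nonneg _)
      rw [this] at hlogim
      simp at hlogim
      have : 0 < σ / C₀ := div_pos (by linarith) hC₀pos
      linarith
    have hsbig : Real.exp (σ / C₀) ≤ ‖s‖ := by
      calc Real.exp (σ / C₀) ≤ Real.exp (Real.log |s.im|) := Real.exp_le_exp.2 hlogim
        _ = |s.im| := Real.exp_log himpos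
        _ ≤ ‖s‖ := Complex.abs_im_le_norm s
    -- norms of Dirichlet terms
    have hnormterm : ∀ (c : ℂ) (k : ℕ), ‖c * (lam k : ℂ) ^ (-s)‖ = ‖c‖ * lam k ^ (-σ) := by
      intro c k
      rw [norm_mul,
        Complex.norm_cpow_eq_rpow_re_of_pos (hpos k), Complex.neg_re]
    -- summability
    have hsum_σ : Summable fun k => ‖a n₀ k‖ * lam k ^ (-σ) := hD n₀ σ hσδ
    have hsum_norm : Summable fun k => ‖a n₀ k * (lam k : ℂ) ^ (-s)‖ := by
      simpa only [hnormterm] using hsum_σ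
    have hsummable : Summable fun k => a n₀ k * (lam k : ℂ) ^ (-s) := hsum_norm.of_norm
    -- split off the k₀ term
    have hsplit : DirichletSeries lam (a n₀) s
        = a n₀ k₀ * (μ : ℂ) ^ (-s)
          + ∑' k, (if k = k₀ then 0 else a n₀ k * (lam k : ℂ) ^ (-s)) :=
      hsummable.tsum_eq_add_tsum_ite k₀
    set T := ∑' k, (if k = k₀ then 0 else a n₀ k * (lam k : ℂ) ^ (-s)) with hTdef
    -- collapse of the finite sum
    have hcollapse : ∑ n ∈ Finset.range (n₀ + 1), s ^ (-(n : ℤ)) * DirichletSeries lam (a n) s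
        = s ^ (-(n₀ : ℤ)) * DirichletSeries lam (a n₀) s := by
      apply Finset.sum_eq_single_of_mem n₀ (Finset.self_mem_range_succ n₀)
      intro n hnmem hne
      have hlt : n < n₀ := lt_of_le_of_ne (Nat.lt_succ_iff.1 (Finset.mem_range.1 hnmem)) hne
      have hzero : DirichletSeries lam (a n) s = 0 := by
        unfold DirichletSeries
        simp [hzero_n n hlt]
      rw [hzero, mul_zero]
    -- remainder bound
    have hR := hC s hσδ
    rw [hcollapse] at hR
    -- key inequality
    have hkey : ‖s ^ (-(n₀ : ℤ)) * (a n₀ k₀ * (μ : ℂ) ^ (-s))‖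
        ≤ ‖f s - s ^ (-(n₀ : ℤ)) * DirichletSeries lam (a n₀) s‖
          + ‖s ^ (-(n₀ : ℤ))‖ * ‖T‖ := by
      have heq : s ^ (-(n₀ : ℤ)) * (a n₀ k₀ * (μ : ℂ) ^ (-s))
          = -(f s - s ^ (-(n₀ : ℤ)) * DirichletSeries lam (a n₀) s)
            + -(s ^ (-(n₀ : ℤ)) * T) := by
        rw [hsplit, hfs]; ring
      rw [heq]
      calc ‖_ + _‖ ≤ ‖-(f s - s ^ (-(n₀ : ℤ)) * DirichletSeries lam (a n₀) s)‖
            + ‖-(s ^ (-(n₀ : ℤ)) * T)‖ := norm_add_le _ _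
        _ = _ := by rw [norm_neg, norm_neg, norm_mul]
    set P := ‖s‖ ^ (-(n₀ : ℤ)) with hPdef
    have hPpos : 0 < P := zpow_pos hsnorm _
    have hnormzpow : ‖s ^ (-(n₀ : ℤ))‖ = P := by rw [norm_zpow]
    have hLHS : ‖s ^ (-(n₀ : ℤ)) * (a n₀ k₀ * (μ : ℂ) ^ (-s))‖
        = P * (‖a n₀ k₀‖ * μ ^ (-σ)) := by
      rw [norm_mul, hnormzpow, hnormterm]
    -- bound for ‖T‖
    have hsum_ite_norm : Summable fun k => ‖(if k = k₀ then 0 else a n₀ k * (lam k : ℂ) ^ (-s))‖ := by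
      apply Summable.of_nonneg_of_le (fun k => norm_nonneg _) _ hsum_norm
      intro k
      split
      · simp only [norm_zero]; exact norm_nonneg _
      · exact le_refl _
    have hsum_rhs : Summable fun k => ν ^ (σ₁ - σ) * (‖a n₀ k‖ * lam k ^ (-σ₁)) :=
      (hD n₀ σ₁ hσ₁).mul_left _
    have hterm : ∀ k, ‖(if k = k₀ then 0 else a n₀ k * (lam k : ℂ) ^ (-s))‖
        ≤ ν ^ (σ₁ - σ) * (‖a n₀ k‖ * lam k ^ (-σ₁)) := by
      intro k
      rcases lt_trichotomy k k₀ with hlt | heq | hgt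
      · rw [if_neg (Nat.ne_of_lt hlt), hzero_k k hlt]
        simp only [zero_mul, norm_zero, mul_zero]
        exact le_rfl
      · rw [if_pos heq]
        simp only [norm_zero]
        exact mul_nonneg (Real.rpow_nonneg hν.le _)
          (mul_nonneg (norm_nonneg _) (Real.rpow_nonneg (hpos k).le _))
      · rw [if_neg (Nat.ne_of_gt hgt), hnormterm]
        have hklam : ν ≤ lam k := hmono.monotone hgt
        have hexp : lam k ^ (σ₁ - σ) ≤ ν ^ (σ₁ - σ) :=
          Real.rpow_le_rpow_of_nonpos hν hklam (by linarith)
        have hsplit_exp : lam k ^ (-σ) = lam k ^ (-σ₁) * lam k ^ (σ₁ - σ) := by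
          rw [← Real.rpow_add (hpos k)]
          congr 1
          ring
        rw [hsplit_exp]
        calc ‖a n₀ k‖ * (lam k ^ (-σ₁) * lam k ^ (σ₁ - σ))
            ≤ ‖a n₀ k‖ * (lam k ^ (-σ₁) * ν ^ (σ₁ - σ)) := by
              apply mul_le_mul_of_nonneg_left _ (norm_nonneg _)
              exact mul_le_mul_of_nonneg_left hexp (Real.rpow_nonneg (hpos k).le _)
          _ = ν ^ (σ₁ - σ) * (‖a n₀ k‖ * lam k ^ (-σ₁)) := by ring
    have hTbound : ‖T‖ ≤ B * ν ^ (-σ) := by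
      have h1 : ‖T‖ ≤ ∑' k, ‖(if k = k₀ then 0 else a n₀ k * (lam k : ℂ) ^ (-s))‖ :=
        norm_tsum_le_tsum_norm hsum_ite_norm
      have h2 : (∑' k, ‖(if k = k₀ then 0 else a n₀ k * (lam k : ℂ) ^ (-s))‖)
          ≤ ∑' k, ν ^ (σ₁ - σ) * (‖a n₀ k‖ * lam k ^ (-σ₁)) :=
        Summable.tsum_le_tsum hterm hsum_ite_norm hsum_rhs
      have h3 : (∑' k, ν ^ (σ₁ - σ) * (‖a n₀ k‖ * lam k ^ (-σ₁))) = ν ^ (σ₁ - σ) * Aconst := by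
        rw [tsum_mul_left]
      have h4 : ν ^ (σ₁ - σ) * Aconst = B * ν ^ (-σ) := by
        have h5 : ν ^ (σ₁ - σ) = ν ^ σ₁ * ν ^ (-σ) := by
          rw [← Real.rpow_add hν, sub_eq_add_neg]
        rw [hBdef, h5]
        ring
      linarith
    -- ν^{-σ} = r^σ * μ^{-σ}
    have hνμ : ν ^ (-σ) = r ^ σ * μ ^ (-σ) := by
      rw [hrdef, Real.div_rpow hμ.le hν.le, Real.rpow_neg hμ.le, Real.rpow_neg hν.le]
      field_simp
    -- remainder estimate
    have hzsplit : ‖s‖ ^ (-(n₀ + 1 : ℤ)) = P * ‖s‖⁻¹ := by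
      rw [hPdef, ← zpow_neg_one, ← zpow_add₀ (ne_of_gt hsnorm)]
      congr 1
      ring
    have hsinv : ‖s‖⁻¹ ≤ (Real.exp (σ / C₀))⁻¹ :=
      inv_anti₀ (Real.exp_pos _) hsbig
    have hexp2 : (Real.exp (σ / C₀))⁻¹ * lamSharp ^ (-σ) ≤ (2 : ℝ)⁻¹ ^ σ * μ ^ (-σ) := by
      have e1 : (Real.exp (σ / C₀))⁻¹ = Real.exp C₀⁻¹ ^ (-σ) := by
        rw [Real.rpow_def_of_pos (Real.exp_pos _), Real.log_exp, ← Real.exp_neg]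
        congr 1
        rw [div_eq_mul_inv]
        ring
      have e2 : Real.exp C₀⁻¹ ^ (-σ) ≤ (2 * μ / lamSharp) ^ (-σ) :=
        Real.rpow_le_rpow_of_nonpos hμSharp hC₀exp (by linarith)
      have e3 : (2 * μ / lamSharp) ^ (-σ) * lamSharp ^ (-σ) = (2 : ℝ)⁻¹ ^ σ * μ ^ (-σ) := by
        rw [← Real.mul_rpow (by positivity) hSharp₀.le]
        rw [div_mul_cancel₀ _ (ne_of_gt hSharp₀)]
        rw [Real.mul_rpow (by norm_num) hμ.le]
        congr 1
        rw [Real.inv_rpow (by norm_num : (0:ℝ) ≤ 2), ← Real.rpow_neg (by norm_num : (0:ℝ) ≤ 2)]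
      calc (Real.exp (σ / C₀))⁻¹ * lamSharp ^ (-σ)
          = Real.exp C₀⁻¹ ^ (-σ) * lamSharp ^ (-σ) := by rw [e1]
        _ ≤ (2 * μ / lamSharp) ^ (-σ) * lamSharp ^ (-σ) :=
            mul_le_mul_of_nonneg_right e2 (Real.rpow_nonneg hSharp₀.le _)
        _ = (2 : ℝ)⁻¹ ^ σ * μ ^ (-σ) := e3
    have hRbound : C * ‖s‖ ^ (-(n₀ + 1 : ℤ)) * lamSharp ^ (-σ)
        ≤ P * (C * (2 : ℝ)⁻¹ ^ σ * μ ^ (-σ)) := by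
      rw [hzsplit]
      have : C * (P * ‖s‖⁻¹) * lamSharp ^ (-σ) = P * (C * (‖s‖⁻¹ * lamSharp ^ (-σ))) := by ring
      rw [this]
      apply mul_le_mul_of_nonneg_left _ hPpos.le
      have h5 : ‖s‖⁻¹ * lamSharp ^ (-σ) ≤ (2 : ℝ)⁻¹ ^ σ * μ ^ (-σ) := by
        calc ‖s‖⁻¹ * lamSharp ^ (-σ) ≤ (Real.exp (σ / C₀))⁻¹ * lamSharp ^ (-σ) :=
              mul_le_mul_of_nonneg_right hsinv (Real.rpow_nonneg hSharp₀.le _)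
          _ ≤ (2 : ℝ)⁻¹ ^ σ * μ ^ (-σ) := hexp2
      calc C * (‖s‖⁻¹ * lamSharp ^ (-σ)) ≤ C * ((2 : ℝ)⁻¹ ^ σ * μ ^ (-σ)) :=
            mul_le_mul_of_nonneg_left h5 hCpos.le
        _ = C * (2 : ℝ)⁻¹ ^ σ * μ ^ (-σ) := by ring
    -- combine everything
    have hμσpos : 0 < μ ^ (-σ) := Real.rpow_pos_of_pos hμ _
    have hfinal : P * (‖a n₀ k₀‖ * μ ^ (-σ))
        ≤ P * μ ^ (-σ) * (B * r ^ σ + C * (2 : ℝ)⁻¹ ^ σ) := by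
      calc P * (‖a n₀ k₀‖ * μ ^ (-σ))
          ≤ ‖f s - s ^ (-(n₀ : ℤ)) * DirichletSeries lam (a n₀) s‖ + P * ‖T‖ := by
            rw [← hLHS, ← hnormzpow]; exact hkey
        _ ≤ C * ‖s‖ ^ (-(n₀ + 1 : ℤ)) * lamSharp ^ (-σ) + P * (B * ν ^ (-σ)) := by
            have := mul_le_mul_of_nonneg_left hTbound hPpos.le
            push_cast at hR ⊢
            linarith
        _ ≤ P * (C * (2 : ℝ)⁻¹ ^ σ * μ ^ (-σ)) + P * (B * (r ^ σ * μ ^ (-σ))) := by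
            rw [← hνμ]; linarith
        _ = P * μ ^ (-σ) * (B * r ^ σ + C * (2 : ℝ)⁻¹ ^ σ) := by ring
    have hdiv : ‖a n₀ k₀‖ ≤ B * r ^ σ + C * (2 : ℝ)⁻¹ ^ σ := by
      have hpm : 0 < P * μ ^ (-σ) := mul_pos hPpos hμσpos
      have h6 := hfinal
      rw [show P * (‖a n₀ k₀‖ * μ ^ (-σ)) = P * μ ^ (-σ) * ‖a n₀ k₀‖ by ring] at h6
      exact le_of_mul_le_mul_left h6 hpm
    linarith [hx₀ σ hσx₀]
  rw [hempty]
  exact Set.finite_empty
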